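/- For every n ≥ 1 and every y ∈ V_n∖V₀, there exists a unique function G_n(·,y) : V_n → ℝ solving the discrete Dirichlet problem (Δ_n G_n(x,y) = −3^n for x = y; Δ_n G_n(x,y) = 0 for x ∈ V_n∖(V₀∪{y}); G_n(a_i,y) = 0 for i = 0,1,2). Moreover, G_n is symmetric, G_n(x,y) = G_n(y,x) for all x,y ∈ V_n∖V₀, and satisfies 0 ≤ G_n(x,y) ≤ G_n(y,y) for all x ∈ V_n and y ∈ V_n∖V₀. -/

import Mathlib

open scoped Classical
open Real Set

noncomputable section

abbrev Pt : Type := ℝ × ℝ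

/-- The three corners of the unit triangle. -/
def sierA : Fin 3 → Pt
  | 0 => (0, 0)
  | 1 => (1 / 2, Real.sqrt 3 / 2)
  | 2 => (1, 0)

/-- The three contractions `φᵢ(x) = (x + aᵢ)/2`. -/
def ctr (i : Fin 3) (x : Pt) : Pt :=
  ((x.1 + (sierA i).1) / 2, (x.2 + (sierA i).2) / 2)

/-- The vertex sets `V n`. -/
def V : ℕ → Finset Pt
  | 0 => {sierA 0, sierA 1, sierA 2}
  | n + 1 => (V n).image (ctr 0) ∪ (V n).image (ctr 1) ∪ (V n).image (ctr 2)

/-- The (ordered) edge sets: `(x, y) ∈ Ed n` iff `{x,y} ∈ E_n`; each undirected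
edge appears with both orientations. -/
def Ed : ℕ → Finset (Pt × Pt)
  | 0 => (V 0 ×ˢ V 0).filter fun p => p.1 ≠ p.2
  | n + 1 => Finset.univ.biUnion fun i : Fin 3 => (Ed n).image fun p => (ctr i p.1, ctr i p.2)

/-- `V* = ⋃ n, V n`. -/
def Vstar : Set Pt := ⋃ n, (V n : Set Pt)

/-- The level-`n` energy `E_n(u,u) = (5/3)^n Σ_{{x,y} ∈ E_n} (u y - u x)²`
(each undirected edge counted once, whence the division by 2). -/
def En (n : ℕ) (u : Pt → ℝ) : ℝ :=
  (5 / 3 : ℝ) ^ n * (∑ p ∈ Ed n, (u p.2 - u p.1) ^ 2) / 2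

/-- The discrete Laplacian `Δ_n u (x) = 5^n Σ_{y ∼ₙ x} (u y - u x)`. -/
def lap (n : ℕ) (u : Pt → ℝ) (x : Pt) : ℝ :=
  (5 : ℝ) ^ n * ∑ p ∈ (Ed n).filter (fun p => p.1 = x), (u p.2 - u p.1)

/-- `g` is the level-`n` Green function with pole at `y`: it solves the
discrete Dirichlet problem `Δ_n g (y) = −3^n`, `Δ_n g (x) = 0` for
`x ∈ V_n ∖ (V₀ ∪ {y})`, and `g = 0` on `V₀ = {a₀,a₁,a₂}`. -/
def IsGreen (n : ℕ) (y : Pt) (g : Pt → ℝ) : Prop :=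
  lap n g y = -(3 : ℝ) ^ n ∧
  (∀ x ∈ (V n : Set Pt), x ∉ (V 0 : Set Pt) → x ≠ y → lap n g x = 0) ∧
  ∀ i : Fin 3, g (sierA i) = 0

-- structural lemmas
lemma sierA_ne {i j : Fin 3} (h : i ≠ j) : sierA i ≠ sierA j := by
  fin_cases i <;> fin_cases j <;> simp_all [sierA, Prod.ext_iff] <;> norm_num

lemma ctr_fix (i : Fin 3) : ctr i (sierA i) = sierA i := by
  unfold ctr; exact Prod.ext (by ring) (by ring)

lemma ctr_comm (i j : Fin 3) : ctr i (sierA j) = ctr j (sierA i) := by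
  unfold ctr; exact Prod.ext (by ring) (by ring)

lemma mem_V0 {x : Pt} : x ∈ V 0 ↔ ∃ i : Fin 3, x = sierA i := by
  constructor
  · intro h
    simp only [V, Finset.mem_insert, Finset.mem_singleton] at h
    rcases h with h | h | h
    exacts [⟨0, h⟩, ⟨1, h⟩, ⟨2, h⟩]
  · rintro ⟨i, rfl⟩
    fin_cases i <;> simp [V]

lemma sierA_mem_V (n : ℕ) (i : Fin 3) : sierA i ∈ V n := by
  induction n with
  | zero => exact mem_V0.2 ⟨i, rfl⟩
  | succ n ih =>
    have : ctr i (sierA i) ∈ (V n).image (ctr i) := Finset.mem_image_of_mem _ ih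
    rw [ctr_fix] at this
    fin_cases i <;>
      simp only [V, Finset.mem_union] <;> tauto

lemma ctr_mem_V {n : ℕ} {x : Pt} (i : Fin 3) (hx : x ∈ V n) : ctr i x ∈ V (n+1) := by
  have : ctr i x ∈ (V n).image (ctr i) := Finset.mem_image_of_mem _ hx
  fin_cases i <;> simp only [V, Finset.mem_union] <;> tauto

lemma mem_V_succ {n : ℕ} {x : Pt} (hx : x ∈ V (n+1)) :
    ∃ i : Fin 3, ∃ v ∈ V n, x = ctr i v := by
  simp only [V, Finset.mem_union, Finset.mem_image] at hx
  rcases hx with (⟨v, hv, rfl⟩ | ⟨v, hv, rfl⟩) | ⟨v, hv, rfl⟩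
  exacts [⟨0, v, hv, rfl⟩, ⟨1, v, hv, rfl⟩, ⟨2, v, hv, rfl⟩]

lemma edge_mem {n : ℕ} {p : Pt × Pt} (hp : p ∈ Ed n) : p.1 ∈ V n ∧ p.2 ∈ V n := by
  induction n generalizing p with
  | zero =>
    simp only [Ed, Finset.mem_filter, Finset.mem_product] at hp
    exact hp.1
  | succ n ih =>
    simp only [Ed, Finset.mem_biUnion, Finset.mem_image, Finset.mem_univ, true_and] at hp
    rcases hp with ⟨i, q, hq, rfl⟩
    exact ⟨ctr_mem_V i (ih hq).1, ctr_mem_V i (ih hq).2⟩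

lemma edge_symm {n : ℕ} {x y : Pt} (h : (x, y) ∈ Ed n) : (y, x) ∈ Ed n := by
  induction n generalizing x y with
  | zero =>
    simp only [Ed, Finset.mem_filter, Finset.mem_product] at h ⊢
    exact ⟨⟨h.1.2, h.1.1⟩, (Ne.symm h.2)⟩
  | succ n ih =>
    simp only [Ed, Finset.mem_biUnion, Finset.mem_image, Finset.mem_univ, true_and] at h ⊢
    rcases h with ⟨i, q, hq, hEq⟩
    refine ⟨i, (q.2, q.1), ih ?_, ?_⟩
    · exact hq
    · cases hEq; rfl

lemma edge0 {i j : Fin 3} (h : i ≠ j) : (sierA i, sierA j) ∈ Ed 0 := by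
  simp only [Ed, Finset.mem_filter, Finset.mem_product]
  exact ⟨⟨mem_V0.2 ⟨i, rfl⟩, mem_V0.2 ⟨j, rfl⟩⟩, sierA_ne h⟩

lemma conn (n : ℕ) (i : Fin 3) :
    ∀ x ∈ V n, Relation.ReflTransGen (fun a b => (a, b) ∈ Ed n) x (sierA i) := by
  induction n generalizing i with
  | zero =>
    intro x hx
    rcases mem_V0.1 hx with ⟨j, rfl⟩
    rcases eq_or_ne j i with rfl | hji
    · exact Relation.ReflTransGen.refl
    · exact Relation.ReflTransGen.single (edge0 hji)
  | succ n ih =>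
    intro x hx
    rcases mem_V_succ hx with ⟨j, v, hv, rfl⟩
    have lift : ∀ (k : Fin 3) (a b : Pt), Relation.ReflTransGen (fun a b => (a, b) ∈ Ed n) a b →
        Relation.ReflTransGen (fun a b => (a, b) ∈ Ed (n+1)) (ctr k a) (ctr k b) := by
      intro k a b h
      refine Relation.ReflTransGen.lift (ctr k) (fun a b hab => ?_) _ _ h
      simp only [Ed, Finset.mem_biUnion, Finset.mem_univ, true_and]
      exact ⟨k, Finset.mem_image_of_mem _ hab⟩
    have h1 := lift j v (sierA i) (ih i v hv)
    have h2 := lift i (sierA j) (sierA i) (ih i (sierA j) (sierA_mem_V n j))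
    rw [ctr_fix] at h2
    rw [ctr_comm j i] at h1
    exact h1.trans h2
lemma lap_add (n : ℕ) (u v : Pt → ℝ) (x : Pt) :
    lap n (fun z => u z + v z) x = lap n u x + lap n v x := by
  unfold lap
  have : ∀ F : Finset (Pt × Pt), ∑ p ∈ F, ((u p.2 + v p.2) - (u p.1 + v p.1))
      = (∑ p ∈ F, (u p.2 - u p.1)) + ∑ p ∈ F, (v p.2 - v p.1) := by
    intro F; rw [← Finset.sum_add_distrib]; exact Finset.sum_congr rfl fun p _ => by ring
  rw [this]; ring

lemma lap_smul (n : ℕ) (c : ℝ) (u : Pt → ℝ) (x : Pt) :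
    lap n (fun z => c * u z) x = c * lap n u x := by
  unfold lap
  have : ∀ F : Finset (Pt × Pt), ∑ p ∈ F, (c * u p.2 - c * u p.1)
      = c * ∑ p ∈ F, (u p.2 - u p.1) := by
    intro F; rw [Finset.mul_sum]; exact Finset.sum_congr rfl fun p _ => by ring
  rw [this]; ring

lemma lap_neg (n : ℕ) (u : Pt → ℝ) (x : Pt) :
    lap n (fun z => -u z) x = -lap n u x := by
  have := lap_smul n (-1) u x
  simp only [neg_one_mul] at this
  rw [this]

lemma lap_sub (n : ℕ) (u v : Pt → ℝ) (x : Pt) :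
    lap n (fun z => u z - v z) x = lap n u x - lap n v x := by
  have h1 := lap_add n u (fun z => -v z) x
  have h2 := lap_neg n v x
  simp only [← sub_eq_add_neg] at h1
  rw [h1, h2]; ring

/-- Maximum principle with stopping set `S`. -/
lemma max_principle (n : ℕ) (u : Pt → ℝ) (S : Set Pt) (hS : sierA 0 ∈ S)
    (h : ∀ x ∈ V n, x ∉ S → 0 ≤ lap n u x) {x : Pt} (hx : x ∈ V n) :
    ∃ z ∈ V n, z ∈ S ∧ u x ≤ u z := by
  obtain ⟨m, hm, hmax⟩ := Finset.exists_max_image (V n) u ⟨x, hx⟩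
  suffices hprop : ∃ z ∈ V n, z ∈ S ∧ u z = u m by
    obtain ⟨z, hz1, hz2, hz3⟩ := hprop
    exact ⟨z, hz1, hz2, hz3 ▸ hmax x hx⟩
  have key : ∀ w : Pt, Relation.ReflTransGen (fun a b => (a, b) ∈ Ed n) w (sierA 0) →
      w ∈ V n → u w = u m → ∃ z ∈ V n, z ∈ S ∧ u z = u m := by
    intro w hw
    induction hw using Relation.ReflTransGen.head_induction_on with
    | refl => intro h1 h2; exact ⟨sierA 0, h1, hS, h2⟩
    | @head a c hac hcs ih =>
      intro ha hum
      by_cases haS : a ∈ S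
      · exact ⟨a, ha, haS, hum⟩
      · have h0 : 0 ≤ lap n u a := h a ha haS
        have hsum_le : ∀ p ∈ (Ed n).filter (fun p => p.1 = a), u p.2 - u p.1 ≤ 0 := by
          intro p hp
          rw [Finset.mem_filter] at hp
          have h2 : u p.2 ≤ u m := hmax _ (edge_mem hp.1).2
          rw [hp.2, hum]
          linarith
        have hsum0 : ∑ p ∈ (Ed n).filter (fun p => p.1 = a), (u p.2 - u p.1) = 0 := by
          have hle : ∑ p ∈ (Ed n).filter (fun p => p.1 = a), (u p.2 - u p.1) ≤ 0 :=
            Finset.sum_nonpos hsum_le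
          have h5 : (0 : ℝ) < 5 ^ n := by positivity
          unfold lap at h0
          nlinarith
        have hterm := (Finset.sum_eq_zero_iff_of_nonpos hsum_le).1 hsum0 (a, c)
          (by rw [Finset.mem_filter]; exact ⟨hac, rfl⟩)
        have huc : u c = u m := by linarith
        exact ih (edge_mem hac).2 huc
  exact key m (conn n 0 m hm) hm rfl
lemma u_zero_V0 {u : Pt → ℝ} (hb : ∀ i : Fin 3, u (sierA i) = 0) {z : Pt}
    (hz : z ∈ (V 0 : Set Pt)) : u z = 0 := by
  rcases mem_V0.1 (by exact_mod_cast hz) with ⟨i, rfl⟩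
  exact hb i

/-- Uniqueness: a function harmonic on the interior vanishing on `V₀` vanishes on `V n`. -/
lemma vanish (n : ℕ) (u : Pt → ℝ)
    (h0 : ∀ x ∈ V n, x ∉ (V 0 : Set Pt) → lap n u x = 0)
    (hb : ∀ i : Fin 3, u (sierA i) = 0) :
    ∀ x ∈ V n, u x = 0 := by
  intro x hx
  have hS : sierA 0 ∈ (V 0 : Set Pt) := by exact_mod_cast sierA_mem_V 0 0
  have h1 : u x ≤ 0 := by
    obtain ⟨z, _, hz2, hz3⟩ := max_principle n u (V 0 : Set Pt) hS
      (fun w hw hwS => le_of_eq (h0 w hw hwS).symm) hx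
    rw [u_zero_V0 hb hz2] at hz3; exact hz3
  have h2 : 0 ≤ u x := by
    obtain ⟨z, _, hz2, hz3⟩ := max_principle n (fun w => -u w) (V 0 : Set Pt) hS
      (fun w hw hwS => by rw [lap_neg, h0 w hw hwS, neg_zero]) hx
    have : -u z = 0 := by rw [u_zero_V0 hb hz2]; ring
    simp only [this] at hz3; linarith
  linarith

/-- Summation by parts: `Σ_{z ∈ V n} u z · Δ v z = 5ⁿ · Σ_{p ∈ Ed n} u p₁ (v p₂ - v p₁)`. -/
lemma sum_lap (n : ℕ) (u v : Pt → ℝ) :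
    ∑ z ∈ V n, u z * lap n v z
      = (5 : ℝ) ^ n * ∑ p ∈ Ed n, u p.1 * (v p.2 - v p.1) := by
  rw [Finset.mul_sum]
  rw [← Finset.sum_fiberwise_of_maps_to (g := fun p : Pt × Pt => p.1)
    (fun p hp => (edge_mem hp).1) (fun p => (5:ℝ)^n * (u p.1 * (v p.2 - v p.1)))]
  refine Finset.sum_congr rfl fun z _ => ?_
  unfold lap
  rw [Finset.mul_sum, Finset.mul_sum]
  refine Finset.sum_congr rfl fun p hp => ?_
  rw [Finset.mem_filter] at hp
  rw [hp.2]; ring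

lemma Q_symm (n : ℕ) (u v : Pt → ℝ) :
    ∑ p ∈ Ed n, u p.1 * (v p.2 - v p.1) = ∑ p ∈ Ed n, v p.1 * (u p.2 - u p.1) := by
  have hswap : ∀ w w' : Pt → ℝ, ∑ p ∈ Ed n, w p.1 * (w' p.2 - w' p.1)
      = ∑ p ∈ Ed n, w p.2 * (w' p.1 - w' p.2) := by
    intro w w'
    refine Finset.sum_nbij' (fun p => (p.2, p.1)) (fun p => (p.2, p.1)) ?_ ?_ ?_ ?_ ?_
    · intro p hp; exact edge_symm (x := p.1) (y := p.2) hp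
    · intro p hp; exact edge_symm (x := p.1) (y := p.2) hp
    · intro p _; rfl
    · intro p _; rfl
    · intro p _; rfl
  have h1 := hswap u v
  have h2 := hswap v u
  have e1 : ∀ p : Pt × Pt, u p.1 * (v p.2 - v p.1) + u p.2 * (v p.1 - v p.2)
      = (u p.1 - u p.2) * (v p.2 - v p.1) := fun p => by ring
  have e2 : ∀ p : Pt × Pt, v p.1 * (u p.2 - u p.1) + v p.2 * (u p.1 - u p.2)
      = (u p.1 - u p.2) * (v p.2 - v p.1) := fun p => by ring
  have E1 : 2 * ∑ p ∈ Ed n, u p.1 * (v p.2 - v p.1)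
      = ∑ p ∈ Ed n, (u p.1 - u p.2) * (v p.2 - v p.1) := by
    rw [two_mul]; nth_rewrite 2 [h1]
    rw [← Finset.sum_add_distrib]
    exact Finset.sum_congr rfl fun p _ => e1 p
  have E2 : 2 * ∑ p ∈ Ed n, v p.1 * (u p.2 - u p.1)
      = ∑ p ∈ Ed n, (u p.1 - u p.2) * (v p.2 - v p.1) := by
    rw [two_mul]; nth_rewrite 2 [h2]
    rw [← Finset.sum_add_distrib]
    exact Finset.sum_congr rfl fun p _ => e2 p
  linarith

lemma green_identity (n : ℕ) (u v : Pt → ℝ) :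
    ∑ z ∈ V n, u z * lap n v z = ∑ z ∈ V n, v z * lap n u z := by
  rw [sum_lap, sum_lap, Q_symm]
/-- Extension by zero of a function on a finite vertex set. -/
def extFun (I : Finset Pt) (u : ↥I → ℝ) : Pt → ℝ :=
  fun x => if h : x ∈ I then u ⟨x, h⟩ else 0

lemma green_exists (n : ℕ) {y : Pt} (hy : y ∈ V n) (hy0 : y ∉ (V 0 : Set Pt)) :
    ∃ g : Pt → ℝ, IsGreen n y g := by
  set I : Finset Pt := (V n).filter (fun x => x ∉ (V 0 : Set Pt)) with hI
  have extadd : ∀ u v : ↥I → ℝ, extFun I (u + v) = fun x => extFun I u x + extFun I v x := by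
    intro u v; funext x; unfold extFun; split <;> simp
  have extsmul : ∀ (c : ℝ) (u : ↥I → ℝ), extFun I (c • u) = fun x => c * extFun I u x := by
    intro c u; funext x; unfold extFun; split <;> simp
  let T : (↥I → ℝ) →ₗ[ℝ] (↥I → ℝ) :=
    { toFun := fun u z => lap n (extFun I u) (z : Pt)
      map_add' := by
        intro u v; funext z
        simp only [extadd, lap_add]; rfl
      map_smul' := by
        intro c u; funext z
        simp only [extsmul, lap_smul]; rfl }
  have hinj : Function.Injective T := by
    rw [injective_iff_map_eq_zero]
    intro u hu
    have hz : ∀ x ∈ V n, extFun I u x = 0 := by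
      refine vanish n (extFun I u) ?_ ?_
      · intro x hx hx0
        have hxI : x ∈ I := by rw [hI, Finset.mem_filter]; exact ⟨hx, hx0⟩
        exact congrFun hu ⟨x, hxI⟩
      · intro i
        have : sierA i ∉ I := by
          rw [hI, Finset.mem_filter]
          push_neg
          intro _
          exact_mod_cast sierA_mem_V 0 i
        unfold extFun; rw [dif_neg this]
    funext z
    show u z = 0
    have hzI : (z : Pt) ∈ V n := (Finset.mem_filter.1 z.2).1
    have h1 := hz z.1 hzI
    unfold extFun at h1
    rwa [dif_pos z.2] at h1
  have hsurj : Function.Surjective T := (LinearMap.injective_iff_surjective).1 hinj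
  obtain ⟨u, hu⟩ := hsurj (fun z => if (z : Pt) = y then -(3 : ℝ) ^ n else 0)
  have hyI : y ∈ I := by rw [hI, Finset.mem_filter]; exact ⟨hy, hy0⟩
  refine ⟨extFun I u, ?_, ?_, ?_⟩
  · have := congrFun hu ⟨y, hyI⟩
    simp at this; exact this
  · intro x hx hx0 hxy
    have hxI : x ∈ I := by
      rw [hI, Finset.mem_filter]; exact ⟨by exact_mod_cast hx, hx0⟩
    have := congrFun hu ⟨x, hxI⟩
    simp [hxy] at this; exact this
  · intro i
    have : sierA i ∉ I := by
      rw [hI, Finset.mem_filter]; push_neg; intro _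
      exact_mod_cast sierA_mem_V 0 i
    unfold extFun; rw [dif_neg this]

lemma green_nonneg (n : ℕ) {y : Pt} (hy : y ∈ V n) {g : Pt → ℝ} (hg : IsGreen n y g) :
    ∀ x ∈ V n, 0 ≤ g x := by
  intro x hx
  have hS : sierA 0 ∈ (V 0 : Set Pt) := by exact_mod_cast sierA_mem_V 0 0
  obtain ⟨z, _, hz2, hz3⟩ := max_principle n (fun w => -g w) (V 0 : Set Pt) hS
    (fun w hw hwS => by
      rw [lap_neg]
      by_cases hwy : w = y
      · rw [hwy, hg.1, neg_neg]; positivity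
      · rw [hg.2.1 w (by exact_mod_cast hw) hwS hwy]; simp) hx
  have : -g z = 0 := by rw [u_zero_V0 hg.2.2 hz2]; ring
  rw [this] at hz3
  linarith

lemma green_le_diag (n : ℕ) {y : Pt} (hy : y ∈ V n) {g : Pt → ℝ} (hg : IsGreen n y g) :
    ∀ x ∈ V n, g x ≤ g y := by
  intro x hx
  have hS : sierA 0 ∈ (V 0 : Set Pt) ∪ {y} := Or.inl (by exact_mod_cast sierA_mem_V 0 0)
  obtain ⟨z, hz1, hz2, hz3⟩ := max_principle n g ((V 0 : Set Pt) ∪ {y}) hS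
    (fun w hw hwS => by
      rw [Set.mem_union, Set.mem_singleton_iff] at hwS
      push_neg at hwS
      rw [hg.2.1 w (by exact_mod_cast hw) hwS.1 hwS.2]) hx
  rw [Set.mem_union, Set.mem_singleton_iff] at hz2
  rcases hz2 with hz2 | rfl
  · have h1 : g z = 0 := u_zero_V0 hg.2.2 hz2
    have h2 : 0 ≤ g y := green_nonneg n hy hg y hy
    linarith
  · exact hz3

/-- Existence, uniqueness (on `V_n`), symmetry and positivity/diagonal bounds
for the level-`n` Green function. -/
theorem green_exists_unique_symm_bounds (n : ℕ) (hn : 1 ≤ n) :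
    (∀ y ∈ (V n : Set Pt), y ∉ (V 0 : Set Pt) →
      (∃ g : Pt → ℝ, IsGreen n y g) ∧
      ∀ g g' : Pt → ℝ, IsGreen n y g → IsGreen n y g' →
        ∀ x ∈ (V n : Set Pt), g x = g' x) ∧
    (∀ x ∈ (V n : Set Pt), x ∉ (V 0 : Set Pt) →
      ∀ y ∈ (V n : Set Pt), y ∉ (V 0 : Set Pt) →
        ∀ gx gy : Pt → ℝ, IsGreen n x gx → IsGreen n y gy → gy x = gx y) ∧
    (∀ y ∈ (V n : Set Pt), y ∉ (V 0 : Set Pt) →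
      ∀ g : Pt → ℝ, IsGreen n y g →
        ∀ x ∈ (V n : Set Pt), 0 ≤ g x ∧ g x ≤ g y) := by
  refine ⟨?_, ?_, ?_⟩
  · intro y hy hy0
    refine ⟨green_exists n (by exact_mod_cast hy) hy0, ?_⟩
    intro g g' hg hg' x hx
    have hvan : ∀ w ∈ V n, g w - g' w = 0 := by
      refine vanish n (fun w => g w - g' w) ?_ ?_
      · intro w hw hw0
        rw [lap_sub]
        by_cases hwy : w = y
        · rw [hwy, hg.1, hg'.1]; ring
        · rw [hg.2.1 w (by exact_mod_cast hw) hw0 hwy,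
            hg'.2.1 w (by exact_mod_cast hw) hw0 hwy]; ring
      · intro i; show g (sierA i) - g' (sierA i) = 0; rw [hg.2.2 i, hg'.2.2 i]; ring
    have := hvan x (by exact_mod_cast hx)
    linarith
  · intro x hx hx0 y hy hy0 gx gy hgx hgy
    have hx' : x ∈ V n := by exact_mod_cast hx
    have hy' : y ∈ V n := by exact_mod_cast hy
    have hid := green_identity n gx gy
    have hL : ∑ z ∈ V n, gx z * lap n gy z = gx y * (-(3 : ℝ) ^ n) := by
      rw [Finset.sum_eq_single_of_mem y hy']
      · rw [hgy.1]
      · intro z hz hzy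
        by_cases hz0 : z ∈ (V 0 : Set Pt)
        · rw [u_zero_V0 hgx.2.2 hz0]; ring
        · rw [hgy.2.1 z (by exact_mod_cast hz) hz0 hzy]; ring
    have hR : ∑ z ∈ V n, gy z * lap n gx z = gy x * (-(3 : ℝ) ^ n) := by
      rw [Finset.sum_eq_single_of_mem x hx']
      · rw [hgx.1]
      · intro z hz hzx
        by_cases hz0 : z ∈ (V 0 : Set Pt)
        · rw [u_zero_V0 hgy.2.2 hz0]; ring
        · rw [hgx.2.1 z (by exact_mod_cast hz) hz0 hzx]; ring
    rw [hL, hR] at hid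
    have h3 : (-(3 : ℝ) ^ n) ≠ 0 := neg_ne_zero.mpr (by positivity)
    exact mul_right_cancel₀ h3 hid.symm
  · intro y hy hy0 g hg x hx
    have hx' : x ∈ V n := by exact_mod_cast hx
    have hy' : y ∈ V n := by exact_mod_cast hy
    exact ⟨green_nonneg n hy' hg x hx', green_le_diag n hy' hg x hx'⟩
end
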